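/- Let ζ be a primitive n-th root of unity and for λ, μ in the alcove A⁺ = {n ≥ λ_1 ≥ ⋯ ≥ λ_k ≥ 1} define the matrix S with entries S_{λμ} = m_λ(ζ^{μ_1},…,ζ^{μ_k})/√(n^k), where m_λ is the monomial symmetric polynomial. Then Σ_{σ ∈ A⁺} m_σ(ζ^{λ}) · |S_σ| · m_σ(ζ^{-μ}) = δ_{λμ} · n^k · |S_λ|, where |S_σ| = ∏_j m_j(σ)! is the stabilizer order. -/

import Mathlib

open Finset

/-- Multiplicity `m_j(σ)` of the part `j` among the components of `σ`. -/
def multiplicity' {k : ℕ} (σ : Fin k → ℕ) (j : ℕ) : ℕ :=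
  (Finset.univ.filter fun i => σ i = j).card

/-- The order `|S_σ| = ∏_j m_j(σ)!` of the stabilizer of `σ` in `S_k`. -/
noncomputable def stabOrder {k : ℕ} (σ : Fin k → ℕ) : ℕ :=
  ∏ᶠ j : ℕ, (multiplicity' σ j).factorial

/-- The evaluation `m_σ(x) = Σ_{α ∼ σ} ∏_i x_i^{α_i}` of the monomial symmetric polynomial. -/
noncomputable def msEval {k : ℕ} (x : Fin k → ℂ) (σ : Fin k → ℕ) : ℂ :=
  ∑ a ∈ Finset.image (fun w : Equiv.Perm (Fin k) => σ ∘ w) Finset.univ, ∏ i, x i ^ a i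

/-- The alcove `A⁺ = {σ : n ≥ σ_1 ≥ … ≥ σ_k ≥ 1}`, realized as a finset. -/
def alcove (n k : ℕ) : Finset (Fin k → Fin (n + 1)) :=
  Finset.univ.filter fun f => Antitone (fun i => ((f i : ℕ))) ∧ ∀ i, 1 ≤ (f i : ℕ)

section Aux

variable {k : ℕ}

lemma multiplicity'_comp (σ : Fin k → ℕ) (w : Equiv.Perm (Fin k)) (j : ℕ) :
    multiplicity' (σ ∘ ⇑w) j = multiplicity' σ j := by
  unfold multiplicity'
  apply Finset.card_bij (fun i _ => w i)
  · intro a ha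
    simp only [Finset.mem_filter, Finset.mem_univ, true_and, Function.comp_apply] at ha ⊢
    exact ha
  · intro a _ b _ h; exact w.injective h
  · intro b hb
    simp only [Finset.mem_filter, Finset.mem_univ, true_and, Function.comp_apply] at hb ⊢
    exact ⟨w⁻¹ b, by simpa using hb, by simp⟩

lemma stabOrder_comp (σ : Fin k → ℕ) (w : Equiv.Perm (Fin k)) :
    stabOrder (σ ∘ ⇑w) = stabOrder σ := by
  unfold stabOrder
  exact finprod_congr fun j => by rw [multiplicity'_comp]

lemma stabOrder_eq_prod (σ : Fin k → ℕ) :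
    stabOrder σ = ∏ j ∈ Finset.image σ univ, (multiplicity' σ j).factorial := by
  apply finprod_eq_prod_of_mulSupport_subset
  intro j hj
  simp only [Function.mem_mulSupport] at hj
  by_contra hmem
  have h0 : multiplicity' σ j = 0 := by
    unfold multiplicity'
    rw [Finset.card_eq_zero, Finset.filter_eq_empty_iff]
    intro i _ h
    exact hmem (by exact_mod_cast Finset.mem_coe.mpr (Finset.mem_image.mpr ⟨i, Finset.mem_univ i, h⟩))
  simp [h0] at hj

lemma stabOrder_eq_card (σ : Fin k → ℕ) :
    stabOrder σ = (univ.filter fun w : Equiv.Perm (Fin k) => σ ∘ ⇑w = σ).card := by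
  classical
  rw [stabOrder_eq_prod, ← Fintype.card_subtype, DomMulAct.stabilizer_card' σ]
  apply Finset.prod_congr rfl
  intro j _
  congr 1
  rw [Fintype.card_subtype]
  rfl

lemma sum_perm_eq (σ : Fin k → ℕ) (F : (Fin k → ℕ) → ℂ) :
    ∑ w : Equiv.Perm (Fin k), F (σ ∘ ⇑w)
      = (stabOrder σ : ℂ)
        * ∑ a ∈ Finset.image (fun w : Equiv.Perm (Fin k) => σ ∘ ⇑w) univ, F a := by
  classical
  rw [Finset.sum_comp F (fun w : Equiv.Perm (Fin k) => σ ∘ ⇑w), Finset.mul_sum]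
  apply Finset.sum_congr rfl
  intro a ha
  obtain ⟨u, -, rfl⟩ := Finset.mem_image.mp ha
  have hcard : (univ.filter fun w : Equiv.Perm (Fin k) => σ ∘ ⇑w = σ ∘ ⇑u).card
      = stabOrder (σ ∘ ⇑u) := by
    rw [stabOrder_eq_card]
    apply Finset.card_bij (fun w _ => u⁻¹ * w)
    · intro w hw
      simp only [Finset.mem_filter, Finset.mem_univ, true_and] at hw ⊢
      funext i
      simpa [Equiv.Perm.mul_apply] using congrFun hw i
    · intro a _ b _ h
      exact mul_left_cancel h
    · intro v hv
      simp only [Finset.mem_filter, Finset.mem_univ, true_and] at hv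
      refine ⟨u * v, ?_, by group⟩
      simp only [Finset.mem_filter, Finset.mem_univ, true_and]
      funext i
      have := congrFun hv i
      simpa [Equiv.Perm.mul_apply] using this
  rw [hcard, stabOrder_comp, nsmul_eq_mul]

lemma sum_perm_orbit (σ : Fin k → ℕ) (u : Equiv.Perm (Fin k)) (F : (Fin k → ℕ) → ℂ) :
    ∑ w : Equiv.Perm (Fin k), F ((σ ∘ ⇑u) ∘ ⇑w) = ∑ w : Equiv.Perm (Fin k), F (σ ∘ ⇑w) := by
  rw [← Equiv.sum_comp (Equiv.mulLeft u) (fun w : Equiv.Perm (Fin k) => F (σ ∘ ⇑w))]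
  rfl

lemma antitone_unique {g h : Fin k → ℕ} (hg : Antitone g) (hh : Antitone h)
    (w : Equiv.Perm (Fin k)) (hgh : g ∘ ⇑w = h) : g = h := by
  have h1 : Monotone (g ∘ ⇑(Fin.revPerm : Equiv.Perm (Fin k))) := by
    intro a b hab
    exact hg (Fin.rev_le_rev.mpr hab)
  have key : g ∘ ⇑(w * (Fin.revPerm : Equiv.Perm (Fin k))) = h ∘ ⇑(Fin.revPerm : Equiv.Perm (Fin k)) := by
    funext i
    simp [Equiv.Perm.mul_apply, ← hgh]
  have h2 : Monotone (g ∘ ⇑(w * (Fin.revPerm : Equiv.Perm (Fin k)))) := by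
    rw [key]
    intro a b hab
    exact hh (Fin.rev_le_rev.mpr hab)
  have := Tuple.unique_monotone h1 h2
  rw [key] at this
  funext i
  have := congrFun this (Fin.rev i)
  simpa [Fin.rev_rev] using this

lemma alcove_biUnion (n : ℕ) :
    (alcove n k).biUnion
        (fun σ => Finset.image (fun w : Equiv.Perm (Fin k) => (fun i => ((σ i : ℕ))) ∘ ⇑w) univ)
      = Fintype.piFinset fun _ : Fin k => Finset.Icc 1 n := by
  classical
  ext f
  simp only [Finset.mem_biUnion, Fintype.mem_piFinset, Finset.mem_Icc, Finset.mem_image,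
    Finset.mem_univ, true_and]
  constructor
  · rintro ⟨σ, hσ, w, rfl⟩
    have hσ' := (Finset.mem_filter.mp hσ).2
    intro i
    exact ⟨hσ'.2 (w i), Nat.lt_succ_iff.mp (σ (w i)).isLt⟩
  · intro hf
    set p : Equiv.Perm (Fin k) := Tuple.sort f * (Fin.revPerm : Equiv.Perm (Fin k)) with hp
    have hmono : Monotone (f ∘ ⇑(Tuple.sort f)) := Tuple.monotone_sort f
    have hanti : Antitone (fun i => f (p i)) := by
      intro a b hab
      exact hmono (Fin.rev_le_rev.mpr hab)
    refine ⟨fun i => ⟨f (p i), Nat.lt_succ_iff.mpr (hf (p i)).2⟩, ?_, p⁻¹, ?_⟩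
    · rw [alcove, Finset.mem_filter]
      exact ⟨Finset.mem_univ _, hanti, fun i => (hf (p i)).1⟩
    · funext i
      simp

lemma alcove_pairwiseDisjoint (n : ℕ) :
    (↑(alcove n k) : Set (Fin k → Fin (n + 1))).PairwiseDisjoint
      (fun σ => Finset.image (fun w : Equiv.Perm (Fin k) => (fun i => ((σ i : ℕ))) ∘ ⇑w) univ) := by
  classical
  intro σ hσ τ hτ hne
  simp only [Finset.mem_coe, alcove, Finset.mem_filter] at hσ hτ
  rw [Function.onFun, Finset.disjoint_left]
  intro a haσ haτ
  obtain ⟨w, -, rfl⟩ := Finset.mem_image.mp haσ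
  obtain ⟨v, -, hv⟩ := Finset.mem_image.mp haτ
  have : (fun i => ((τ i : ℕ))) = (fun i => ((σ i : ℕ))) := by
    apply antitone_unique hτ.2.1 hσ.2.1 (v * w⁻¹)
    funext i
    have := congrFun hv (w⁻¹ i)
    simpa [Equiv.Perm.mul_apply] using this
  apply hne
  funext i
  exact (Fin.val_injective (congrFun this i)).symm

lemma pow_eq_pow_iff' {n : ℕ} (hn : 0 < n) {ζ : ℂ} (hζ : IsPrimitiveRoot ζ n)
    {a b : ℕ} (ha1 : 1 ≤ a) (han : a ≤ n) (hb1 : 1 ≤ b) (hbn : b ≤ n) :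
    ζ ^ a = ζ ^ b ↔ a = b := by
  constructor
  · intro h
    rcases eq_or_lt_of_le han with rfl | ha
    · rcases eq_or_lt_of_le hbn with rfl | hb
      · rfl
      · exfalso
        have h1 : ζ ^ b = 1 := by rw [← h, hζ.pow_eq_one]
        have := Nat.le_of_dvd hb1 (hζ.dvd_of_pow_eq_one b h1)
        omega
    · rcases eq_or_lt_of_le hbn with rfl | hb
      · exfalso
        have h1 : ζ ^ a = 1 := by rw [h, hζ.pow_eq_one]
        have := Nat.le_of_dvd ha1 (hζ.dvd_of_pow_eq_one a h1)
        omega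
      · exact hζ.pow_inj ha hb h
  · rintro rfl; rfl

lemma geom_lemma {n : ℕ} (hn : 0 < n) {ζ : ℂ} (hζ : IsPrimitiveRoot ζ n)
    {a b : ℕ} (ha1 : 1 ≤ a) (han : a ≤ n) (hb1 : 1 ≤ b) (hbn : b ≤ n) :
    ∑ t ∈ Finset.Icc 1 n, (ζ ^ a * (ζ ^ b)⁻¹) ^ t = if a = b then (n : ℂ) else 0 := by
  have hζ0 : ζ ≠ 0 := hζ.ne_zero hn.ne'
  by_cases hab : a = b
  · subst hab
    rw [if_pos rfl, mul_inv_cancel₀ (pow_ne_zero a hζ0)]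
    simp [Nat.card_Icc]
  · rw [if_neg hab]
    set c : ℂ := ζ ^ a * (ζ ^ b)⁻¹ with hc
    have hc1 : c ≠ 1 := by
      intro h
      apply hab
      rw [← pow_eq_pow_iff' hn hζ ha1 han hb1 hbn]
      field_simp [hc] at h
      rw [hc, mul_inv_eq_one₀ (pow_ne_zero b hζ0)] at h
      exact h
    have hcn : c ^ n = 1 := by
      rw [hc, mul_pow, inv_pow, ← pow_mul, ← pow_mul, mul_comm a n, mul_comm b n,
        pow_mul, pow_mul, hζ.pow_eq_one, one_pow, one_pow, inv_one, mul_one]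
    have hgeo : ∑ t ∈ Finset.range n, c ^ t = 0 := by
      rw [geom_sum_eq hc1, hcn, sub_self, zero_div]
    have hIcc : Finset.Icc 1 n = Finset.Ico 1 (n + 1) := by
      rw [Finset.Ico_add_one_right_eq_Icc]
    rw [hIcc, Finset.sum_Ico_eq_sum_range]
    simp only [Nat.add_sub_cancel]
    calc ∑ t ∈ Finset.range n, c ^ (1 + t) = c * ∑ t ∈ Finset.range n, c ^ t := by
          rw [Finset.mul_sum]
          exact Finset.sum_congr rfl fun t _ => by rw [pow_add, pow_one]
      _ = 0 := by rw [hgeo, mul_zero]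

end Aux

/-- `Σ_{σ ∈ A⁺} m_σ(ζ^λ) |S_σ| m_σ(ζ^{−μ}) = δ_{λμ} n^k |S_λ|`. -/
theorem stmt15 {n k : ℕ} (hn : 0 < n) (ζ : ℂ) (hζ : IsPrimitiveRoot ζ n)
    (lam mu : Fin k → ℕ)
    (hlam : Antitone lam ∧ ∀ i, 1 ≤ lam i ∧ lam i ≤ n)
    (hmu : Antitone mu ∧ ∀ i, 1 ≤ mu i ∧ mu i ≤ n) :
    ∑ σ ∈ alcove n k,
        msEval (fun i => ζ ^ lam i) (fun i => ((σ i : ℕ)))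
          * (stabOrder fun i => ((σ i : ℕ)))
          * msEval (fun i => (ζ ^ mu i)⁻¹) (fun i => ((σ i : ℕ)))
      = if lam = mu then (n : ℂ) ^ k * (stabOrder lam : ℂ) else 0 := by
  classical
  obtain ⟨hlamA, hlamB⟩ := hlam
  obtain ⟨hmuA, hmuB⟩ := hmu
  set H : (Fin k → ℕ) → ℂ := fun f =>
    (∏ i, (ζ ^ lam i) ^ f i) * ∑ w : Equiv.Perm (Fin k), ∏ i, ((ζ ^ mu i)⁻¹) ^ f (w i) with hH
  have step1 : ∀ σ ∈ alcove n k,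
      msEval (fun i => ζ ^ lam i) (fun i => ((σ i : ℕ)))
        * (stabOrder fun i => ((σ i : ℕ)))
        * msEval (fun i => (ζ ^ mu i)⁻¹) (fun i => ((σ i : ℕ)))
      = ∑ a ∈ Finset.image (fun w : Equiv.Perm (Fin k) => (fun i => ((σ i : ℕ))) ∘ ⇑w) univ,
          H a := by
    intro σ _
    set g : Fin k → ℕ := fun i => ((σ i : ℕ)) with hg
    have e1 : (stabOrder g : ℂ) * msEval (fun i => (ζ ^ mu i)⁻¹) g
        = ∑ w : Equiv.Perm (Fin k), ∏ i, ((ζ ^ mu i)⁻¹) ^ g (w i) := by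
      rw [msEval, ← sum_perm_eq g (fun a => ∏ i, ((ζ ^ mu i)⁻¹) ^ a i)]
      rfl
    rw [mul_assoc, e1, msEval, Finset.sum_mul]
    apply Finset.sum_congr rfl
    intro a ha
    obtain ⟨u, -, rfl⟩ := Finset.mem_image.mp ha
    have e2 : ∑ w : Equiv.Perm (Fin k), ∏ i, ((ζ ^ mu i)⁻¹) ^ g (w i)
        = ∑ w : Equiv.Perm (Fin k), ∏ i, ((ζ ^ mu i)⁻¹) ^ (g ∘ ⇑u) (w i) := by
      exact (sum_perm_orbit g u (fun a => ∏ i, ((ζ ^ mu i)⁻¹) ^ a i)).symm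
    rw [e2]
  rw [Finset.sum_congr rfl step1, ← Finset.sum_biUnion (alcove_pairwiseDisjoint n),
    alcove_biUnion n]
  have step2 : ∑ f ∈ Fintype.piFinset (fun _ : Fin k => Finset.Icc 1 n), H f
      = ∑ w : Equiv.Perm (Fin k), ∏ i, (if lam i = mu (w⁻¹ i) then (n : ℂ) else 0) := by
    simp only [hH, Finset.mul_sum]
    rw [Finset.sum_comm]
    apply Finset.sum_congr rfl
    intro w _
    have reprod : ∀ f : Fin k → ℕ,
        (∏ i, ((ζ ^ mu i)⁻¹) ^ f (w i)) = ∏ i, ((ζ ^ mu (w⁻¹ i))⁻¹) ^ f i := by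
      intro f
      rw [← Equiv.prod_comp w (fun j => ((ζ ^ mu (w⁻¹ j))⁻¹) ^ f j)]
      exact Finset.prod_congr rfl fun i _ => by simp
    calc ∑ f ∈ Fintype.piFinset (fun _ : Fin k => Finset.Icc 1 n),
          (∏ i, (ζ ^ lam i) ^ f i) * ∏ i, ((ζ ^ mu i)⁻¹) ^ f (w i)
        = ∑ f ∈ Fintype.piFinset (fun _ : Fin k => Finset.Icc 1 n),
            ∏ i, (ζ ^ lam i * (ζ ^ mu (w⁻¹ i))⁻¹) ^ f i := by
          apply Finset.sum_congr rfl
          intro f _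
          rw [reprod f, ← Finset.prod_mul_distrib]
          exact Finset.prod_congr rfl fun i _ => (mul_pow _ _ _).symm
      _ = ∏ i, ∑ t ∈ Finset.Icc 1 n, (ζ ^ lam i * (ζ ^ mu (w⁻¹ i))⁻¹) ^ t :=
          (Finset.prod_univ_sum _ _).symm
      _ = ∏ i, (if lam i = mu (w⁻¹ i) then (n : ℂ) else 0) := by
          apply Finset.prod_congr rfl
          intro i _
          exact geom_lemma hn hζ (hlamB i).1 (hlamB i).2 (hmuB _).1 (hmuB _).2
  rw [step2]
  have step3 : ∀ w : Equiv.Perm (Fin k),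
      (∏ i, (if lam i = mu (w⁻¹ i) then (n : ℂ) else 0))
        = if lam ∘ ⇑w = mu then (n : ℂ) ^ k else 0 := by
    intro w
    by_cases h : lam ∘ ⇑w = mu
    · have hi : ∀ i, lam i = mu (w⁻¹ i) := by
        intro i
        have := congrFun h (w⁻¹ i)
        simpa using this
      rw [if_pos h]
      rw [Finset.prod_congr rfl fun i _ => if_pos (hi i), Finset.prod_const,
        Finset.card_univ, Fintype.card_fin]
    · rw [if_neg h]
      have : ∃ i, lam (w i) ≠ mu i := by
        by_contra hc
        push_neg at hc
        exact h (funext hc)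
      obtain ⟨i, hi⟩ := this
      apply Finset.prod_eq_zero (Finset.mem_univ (w i))
      rw [if_neg]
      intro hcon
      apply hi
      rw [hcon]
      congr 1
      simp
  rw [Finset.sum_congr rfl fun w _ => step3 w, ← Finset.sum_filter, Finset.sum_const,
    nsmul_eq_mul]
  by_cases hlm : lam = mu
  · subst hlm
    rw [if_pos rfl, ← stabOrder_eq_card lam, mul_comm]
  · rw [if_neg hlm]
    have hempty : (univ.filter fun w : Equiv.Perm (Fin k) => lam ∘ ⇑w = mu) = ∅ := by
      rw [Finset.filter_eq_empty_iff]
      intro w _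
      intro hcon
      exact hlm (antitone_unique hlamA hmuA w hcon)
    rw [hempty]
    simp
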